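/- Let Q ∈ C(ℚ) be a fixed rational point on the Pell conic and set c = 5·H(Q). Then for all P ∈ C(ℚ) one has (1/c)·H(P) ≤ H(P + Q) ≤ c·H(P). -/
import Mathlib


open Filter Real

/-- The defining equation of the Pell conic `X² - ΔY² = 4`. -/
def PellSol (Δ : ℚ) (P : ℚ × ℚ) : Prop := P.1 ^ 2 - Δ * P.2 ^ 2 = 4

/-- The rational points on the Pell conic `X² - ΔY² = 4`. -/
def Conic (Δ : ℚ) : Type := {P : ℚ × ℚ // PellSol Δ P}

namespace Conic

variable {Δ : ℚ}

/-- Addition on the Pell conic. -/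
instance : Add (Conic Δ) :=
  ⟨fun P Q => ⟨((P.val.1 * Q.val.1 + Δ * P.val.2 * Q.val.2) / 2,
    (P.val.1 * Q.val.2 + P.val.2 * Q.val.1) / 2), by
      have hP := P.property
      have hQ := Q.property
      unfold PellSol at *
      dsimp only
      linear_combination ((Q.val.1 ^ 2 - Δ * Q.val.2 ^ 2) / 4) * hP + hQ⟩⟩

/-- The neutral element `(2,0)` of the Pell conic. -/
instance : Zero (Conic Δ) := ⟨⟨(2, 0), by unfold PellSol; norm_num⟩⟩

/-- The negative of a point on the Pell conic. -/
instance : Neg (Conic Δ) :=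
  ⟨fun P => ⟨(P.val.1, -P.val.2), by
    have hP := P.property
    unfold PellSol at *
    dsimp only
    linear_combination hP⟩⟩

@[simp] lemma add_val (P Q : Conic Δ) :
    (P + Q).val = ((P.val.1 * Q.val.1 + Δ * P.val.2 * Q.val.2) / 2,
      (P.val.1 * Q.val.2 + P.val.2 * Q.val.1) / 2) := rfl

@[simp] lemma zero_val : ((0 : Conic Δ)).val = (2, 0) := rfl

@[simp] lemma neg_val (P : Conic Δ) : (-P).val = (P.val.1, -P.val.2) := rfl

protected lemma add_assoc' (P Q R : Conic Δ) : P + Q + R = P + (Q + R) := by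
  apply Subtype.ext
  rw [Prod.ext_iff, add_val, add_val, add_val, add_val]
  constructor <;> (dsimp only; ring)

protected lemma zero_add' (P : Conic Δ) : 0 + P = P := by
  apply Subtype.ext
  rw [Prod.ext_iff, add_val, zero_val]
  constructor <;> (dsimp only; ring)

protected lemma add_zero' (P : Conic Δ) : P + 0 = P := by
  apply Subtype.ext
  rw [Prod.ext_iff, add_val, zero_val]
  constructor <;> (dsimp only; ring)

protected lemma neg_add_cancel' (P : Conic Δ) : -P + P = 0 := by
  have hP := P.property
  unfold PellSol at hP
  apply Subtype.ext
  rw [Prod.ext_iff, add_val, neg_val, zero_val]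
  constructor
  · dsimp only
    linear_combination hP / 2
  · dsimp only; ring

protected lemma add_comm' (P Q : Conic Δ) : P + Q = Q + P := by
  apply Subtype.ext
  rw [Prod.ext_iff, add_val, add_val]
  constructor <;> (dsimp only; ring)

/-- The group structure on the rational points of the Pell conic. -/
instance : AddCommGroup (Conic Δ) where
  add := (· + ·)
  zero := 0
  neg := Neg.neg
  nsmul := nsmulRec
  zsmul := zsmulRec
  add_assoc := Conic.add_assoc'
  zero_add := Conic.zero_add'
  add_zero := Conic.add_zero'
  neg_add_cancel := Conic.neg_add_cancel'
  add_comm := Conic.add_comm'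

end Conic
section Extra

namespace Conic

variable {Δ : ℚ}

/-- The naive height of a point on a Pell conic: `H(x,y) = max(|num x|, den x)`. -/
noncomputable def height (P : Conic Δ) : ℝ :=
  max (|P.val.1.num| : ℝ) (P.val.1.den : ℝ)

/-- The logarithmic height `h₀(P) = log H(P)`. -/
noncomputable def logHeight (P : Conic Δ) : ℝ := Real.log (height P)

/-- The canonical height `h(P) = lim 2⁻ⁿ h₀(2ⁿ P)`. -/
noncomputable def canHeight (P : Conic Δ) : ℝ :=
  limUnder atTop (fun n : ℕ => logHeight ((2 ^ n) • P) / 2 ^ n)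

end Conic

/-- The integral points form a subgroup of the group of rational points on
the Pell conic `X² - ΔY² = 4` (for an integral `Δ`). -/
def intPoints (Δ : ℤ) : AddSubgroup (Conic (Δ : ℚ)) where
  carrier := {P | ∃ a b : ℤ, P.val = ((a : ℚ), (b : ℚ))}
  zero_mem' := ⟨2, 0, by rw [Conic.zero_val]; norm_num⟩
  neg_mem' := by
    rintro P ⟨a, b, h⟩
    exact ⟨a, -b, by rw [Conic.neg_val, h]; push_cast; rfl⟩
  add_mem' := by
    rintro P Q ⟨a, b, hP⟩ ⟨c, e, hQ⟩
    have hPp := P.property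
    have hQp := Q.property
    unfold PellSol at hPp hQp
    rw [hP] at hPp
    rw [hQ] at hQp
    dsimp only at hPp hQp
    have ha : a ^ 2 - Δ * b ^ 2 = 4 := by exact_mod_cast hPp
    have hc : c ^ 2 - Δ * e ^ 2 = 4 := by exact_mod_cast hQp
    have key : ∀ A B C E F : ZMod 2, A ^ 2 - F * B ^ 2 = 4 → C ^ 2 - F * E ^ 2 = 4 →
        (A * C + F * B * E = 0 ∧ A * E + B * C = 0) := by decide
    have ha2 : (a : ZMod 2) ^ 2 - (Δ : ZMod 2) * (b : ZMod 2) ^ 2 = 4 := by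
      have := congrArg (fun z : ℤ => (z : ZMod 2)) ha
      push_cast at this
      exact_mod_cast this
    have hc2 : (c : ZMod 2) ^ 2 - (Δ : ZMod 2) * (e : ZMod 2) ^ 2 = 4 := by
      have := congrArg (fun z : ℤ => (z : ZMod 2)) hc
      push_cast at this
      exact_mod_cast this
    obtain ⟨k1, k2⟩ := key (a : ZMod 2) (b : ZMod 2) (c : ZMod 2) (e : ZMod 2) (Δ : ZMod 2) ha2 hc2
    have d1 : (2 : ℤ) ∣ (a * c + Δ * b * e) := by
      have : ((a * c + Δ * b * e : ℤ) : ZMod 2) = 0 := by push_cast; linear_combination k1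
      exact_mod_cast (ZMod.intCast_zmod_eq_zero_iff_dvd _ 2).mp this
    have d2 : (2 : ℤ) ∣ (a * e + b * c) := by
      have : ((a * e + b * c : ℤ) : ZMod 2) = 0 := by push_cast; linear_combination k2
      exact_mod_cast (ZMod.intCast_zmod_eq_zero_iff_dvd _ 2).mp this
    obtain ⟨X, hX⟩ := d1
    obtain ⟨Y, hY⟩ := d2
    refine ⟨X, Y, ?_⟩
    rw [Conic.add_val, hP, hQ]
    have hX' : ((a : ℚ) * c + Δ * b * e) = 2 * X := by exact_mod_cast congrArg (fun z : ℤ => (z : ℚ)) hX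
    have hY' : ((a : ℚ) * e + b * c) = 2 * Y := by exact_mod_cast congrArg (fun z : ℤ => (z : ℚ)) hY
    rw [Prod.ext_iff]
    constructor
    · dsimp only
      rw [div_eq_iff (by norm_num : (2:ℚ) ≠ 0)]
      linarith [hX']
    · dsimp only
      rw [div_eq_iff (by norm_num : (2:ℚ) ≠ 0)]
      linarith [hY']

end Extra

section MyHelpers

lemma num_den_le (q : ℚ) (p n : ℤ) (hn : n ≠ 0) (h : q = (p : ℚ) / (n : ℚ)) :
    |q.num| ≤ |p| ∧ (q.den : ℤ) ≤ |n| := by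
  have hq : q = Rat.divInt p n := by rw [Rat.divInt_eq_div]; exact h
  constructor
  · rcases eq_or_ne p 0 with hp | hp
    · subst hp; simp at h; simp [h]
    · have hd : q.num ∣ p := hq ▸ Rat.num_dvd p hn
      exact Int.le_of_dvd (abs_pos.mpr hp) ((abs_dvd _ _).mpr ((dvd_abs _ _).mpr hd))
  · have hd : (q.den : ℤ) ∣ n := hq ▸ Rat.den_dvd p n
    exact Int.le_of_dvd (abs_pos.mpr hn) ((dvd_abs _ _).mpr hd)

lemma conic_height_eq {Δ : ℚ} (P : Conic Δ) :
    Conic.height P = ((max |P.val.1.num| (P.val.1.den : ℤ) : ℤ) : ℝ) := by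
  unfold Conic.height
  push_cast
  rfl

set_option maxHeartbeats 1000000 in
lemma conic_height_add_le {Δ : ℚ} (P Q : Conic Δ) :
    Conic.height (P + Q) ≤ 5 * Conic.height Q * Conic.height P := by
  set x := P.val.1 with hxdef
  set y := P.val.2 with hydef
  set t := Q.val.1 with htdef
  set u := Q.val.2 with hudef
  have hP : x ^ 2 - Δ * y ^ 2 = 4 := P.property
  have hQ : t ^ 2 - Δ * u ^ 2 = 4 := Q.property
  set r : ℤ := x.num with hrdef
  set s : ℤ := (x.den : ℤ) with hsdef
  set a : ℤ := t.num with hadef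
  set b : ℤ := (t.den : ℤ) with hbdef
  have hs : 0 < s := by rw [hsdef]; exact_mod_cast x.den_pos
  have hb : 0 < b := by rw [hbdef]; exact_mod_cast t.den_pos
  have hxr : x * (s : ℚ) = (r : ℚ) := by
    push_cast
    exact Rat.mul_den_eq_num x
  have hta : t * (b : ℚ) = (a : ℚ) := by
    push_cast
    exact Rat.mul_den_eq_num t
  set w : ℚ := Δ * y * u with hwdef
  have hw2 : w ^ 2 = (x ^ 2 - 4) * (t ^ 2 - 4) := by
    linear_combination (-(Δ * u ^ 2)) * hP + (-(x ^ 2 - 4)) * hQ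
  have h1 : (s : ℚ) ^ 2 * (x ^ 2 - 4) = (r : ℚ) ^ 2 - 4 * (s : ℚ) ^ 2 := by
    linear_combination (x * (s : ℚ) + (r : ℚ)) * hxr
  have h2 : (b : ℚ) ^ 2 * (t ^ 2 - 4) = (a : ℚ) ^ 2 - 4 * (b : ℚ) ^ 2 := by
    linear_combination (t * (b : ℚ) + (a : ℚ)) * hta
  set m : ℚ := (s : ℚ) * (b : ℚ) * w with hmdef
  have hm2 : m * m = ((r : ℚ) ^ 2 - 4 * (s : ℚ) ^ 2) * ((a : ℚ) ^ 2 - 4 * (b : ℚ) ^ 2) := by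
    rw [hmdef]
    linear_combination (s : ℚ) ^ 2 * (b : ℚ) ^ 2 * hw2 + (b : ℚ) ^ 2 * (t ^ 2 - 4) * h1
      + ((r : ℚ) ^ 2 - 4 * (s : ℚ) ^ 2) * h2
  have hm2' : m * m = (((r ^ 2 - 4 * s ^ 2) * (a ^ 2 - 4 * b ^ 2) : ℤ) : ℚ) := by
    rw [hm2]; push_cast; ring
  have hden1 : m.den = 1 := by
    have h := Rat.mul_self_den m
    rw [hm2'] at h
    simp only [Rat.den_intCast] at h
    exact Nat.eq_one_of_mul_eq_one_right h.symm
  set M : ℤ := m.num with hMdef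
  have hM : (M : ℚ) = m := (Rat.den_eq_one_iff m).mp hden1
  have hM2 : M ^ 2 = (r ^ 2 - 4 * s ^ 2) * (a ^ 2 - 4 * b ^ 2) := by
    have h : ((M : ℚ)) ^ 2 = (((r ^ 2 - 4 * s ^ 2) * (a ^ 2 - 4 * b ^ 2) : ℤ) : ℚ) := by
      rw [hM]; linear_combination hm2'
    exact_mod_cast h
  set HP : ℤ := max |r| s with hHPdef
  set HQ : ℤ := max |a| b with hHQdef
  have hHP1 : (1 : ℤ) ≤ HP := le_trans hs (le_max_right _ _)
  have hHQ1 : (1 : ℤ) ≤ HQ := le_trans hb (le_max_right _ _)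
  have hrHP : |r| ≤ HP := le_max_left _ _
  have hsHP : s ≤ HP := le_max_right _ _
  have haHQ : |a| ≤ HQ := le_max_left _ _
  have hbHQ : b ≤ HQ := le_max_right _ _
  have hr2 : r ^ 2 ≤ HP ^ 2 := by
    calc r ^ 2 = |r| ^ 2 := (sq_abs r).symm
    _ ≤ HP ^ 2 := pow_le_pow_left₀ (abs_nonneg r) hrHP 2
  have hs2 : s ^ 2 ≤ HP ^ 2 := pow_le_pow_left₀ hs.le hsHP 2
  have ha2 : a ^ 2 ≤ HQ ^ 2 := by
    calc a ^ 2 = |a| ^ 2 := (sq_abs a).symm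
    _ ≤ HQ ^ 2 := pow_le_pow_left₀ (abs_nonneg a) haHQ 2
  have hbb2 : b ^ 2 ≤ HQ ^ 2 := pow_le_pow_left₀ hb.le hbHQ 2
  have hb1 : |r ^ 2 - 4 * s ^ 2| ≤ 4 * HP ^ 2 := by
    rw [abs_le]
    constructor
    · linarith [sq_nonneg r]
    · linarith [sq_nonneg s, sq_nonneg HP]
  have hb2 : |a ^ 2 - 4 * b ^ 2| ≤ 4 * HQ ^ 2 := by
    rw [abs_le]
    constructor
    · linarith [sq_nonneg a]
    · linarith [sq_nonneg b, sq_nonneg HQ]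
  have hMsq : M ^ 2 ≤ 16 * HP ^ 2 * HQ ^ 2 := by
    calc M ^ 2 = (r ^ 2 - 4 * s ^ 2) * (a ^ 2 - 4 * b ^ 2) := hM2
    _ ≤ |(r ^ 2 - 4 * s ^ 2) * (a ^ 2 - 4 * b ^ 2)| := le_abs_self _
    _ = |r ^ 2 - 4 * s ^ 2| * |a ^ 2 - 4 * b ^ 2| := abs_mul _ _
    _ ≤ (4 * HP ^ 2) * (4 * HQ ^ 2) := by
        apply mul_le_mul hb1 hb2 (abs_nonneg _) (by positivity)
    _ = 16 * HP ^ 2 * HQ ^ 2 := by ring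
  have hK0 : (0 : ℤ) ≤ 4 * HP * HQ := by
    have : (0:ℤ) < HP := lt_of_lt_of_le one_pos hHP1
    have : (0:ℤ) < HQ := lt_of_lt_of_le one_pos hHQ1
    positivity
  have hMle : |M| ≤ 4 * HP * HQ := by
    have hsq : |M| ^ 2 ≤ (4 * HP * HQ) ^ 2 := by
      calc |M| ^ 2 = M ^ 2 := sq_abs M
      _ ≤ 16 * HP ^ 2 * HQ ^ 2 := hMsq
      _ = (4 * HP * HQ) ^ 2 := by ring
    exact (pow_le_pow_iff_left₀ (abs_nonneg M) hK0 two_ne_zero).mp hsq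
  have hsb : (2 * s * b : ℤ) ≠ 0 := by positivity
  have hXeq : (P + Q).val.1 = (((r * a + M : ℤ)) : ℚ) / (((2 * s * b : ℤ)) : ℚ) := by
    rw [Conic.add_val]
    dsimp only
    rw [div_eq_div_iff (by norm_num) (by exact_mod_cast hsb)]
    push_cast at hxr hta hM ⊢
    linear_combination (2 * (t.den : ℚ) * t) * hxr + (2 * (x.num : ℚ)) * hta - 2 * hM
  obtain ⟨hnum, hden⟩ := num_den_le _ _ _ hsb hXeq
  have hnum' : |(P + Q).val.1.num| ≤ 5 * HQ * HP := by
    calc |(P + Q).val.1.num| ≤ |r * a + M| := hnum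
    _ ≤ |r * a| + |M| := abs_add_le _ _
    _ = |r| * |a| + |M| := by rw [abs_mul]
    _ ≤ HP * HQ + 4 * HP * HQ :=
        add_le_add (mul_le_mul hrHP haHQ (abs_nonneg a) (le_trans (abs_nonneg r) hrHP)) hMle
    _ = 5 * HQ * HP := by ring
  have hden' : ((P + Q).val.1.den : ℤ) ≤ 5 * HQ * HP := by
    calc ((P + Q).val.1.den : ℤ) ≤ |2 * s * b| := hden
    _ = 2 * s * b := abs_of_pos (by positivity)
    _ ≤ 5 * HQ * HP := by
        have h0 : s * b ≤ HP * HQ :=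
          mul_le_mul hsHP hbHQ hb.le (le_trans hs.le hsHP)
        have h1 : (0:ℤ) ≤ HP * HQ := le_trans (mul_pos hs hb).le h0
        linarith
  have final : Conic.height (P + Q) ≤ ((5 * HQ * HP : ℤ) : ℝ) := by
    rw [conic_height_eq]
    exact_mod_cast max_le hnum' hden'
  have hPh : Conic.height P = (HP : ℝ) := by rw [conic_height_eq]
  have hQh : Conic.height Q = (HQ : ℝ) := by rw [conic_height_eq]
  calc Conic.height (P + Q) ≤ ((5 * HQ * HP : ℤ) : ℝ) := final
  _ = 5 * Conic.height Q * Conic.height P := by rw [hPh, hQh]; push_cast; ring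

end MyHelpers

/-- For a fixed rational point `Q` on the Pell conic and `c = 5·H(Q)`,
every rational point `P` satisfies `(1/c)·H(P) ≤ H(P + Q) ≤ c·H(P)`. -/
theorem height_translate (d : ℤ) (hsf : Squarefree d) (hd0 : d ≠ 0) (hd1 : d ≠ 1)
    (Δ : ℤ) (hΔ : Δ = if d % 4 = 1 then d else 4 * d)
    (Q : Conic (Δ : ℚ)) (c : ℝ) (hc : c = 5 * Conic.height Q) :
    ∀ P : Conic (Δ : ℚ),
      (1 / c) * Conic.height P ≤ Conic.height (P + Q) ∧
      Conic.height (P + Q) ≤ c * Conic.height P := by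
  intro P
  have hupper := conic_height_add_le P Q
  have hlow := conic_height_add_le (P + Q) (-Q)
  rw [add_neg_cancel_right] at hlow
  have hnegQ : Conic.height (-Q) = Conic.height Q := rfl
  rw [hnegQ] at hlow
  have hQpos : 0 < Conic.height Q := by
    have h1 : (1 : ℝ) ≤ (Q.val.1.den : ℝ) := by exact_mod_cast Q.val.1.den_pos
    exact lt_of_lt_of_le one_pos (le_max_of_le_right h1)
  have hcpos : 0 < c := by rw [hc]; linarith
  constructor
  · rw [div_mul_eq_mul_div, one_mul, div_le_iff₀ hcpos, hc]
    exact hlow.trans (le_of_eq (by ring))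
  · rw [hc]
    exact hupper
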